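/- There exists a probability distribution p on three binary variables A, B, C, namely p(0,0,0)=3/10, p(0,0,1)=0, p(0,1,0)=2/10, p(0,1,1)=0, p(1,0,0)=1/10, p(1,0,1)=1/10, p(1,1,0)=2/10, p(1,1,1)=1/10, such that I_2(A:BC) = 9/25 < 3/8 = f(2,2,4) while I_2(A:B) = 13/50 > 1/4 = f(2,2,2). In particular, the Tsallis constraint I_q(A:BC) ≤ f(q,d_A,d_{BC}) does not imply I_q(A:B) ≤ f(q,d_A,d_B). -/

import Mathlib

open Finset

/-- Tsallis entropy of order `q` of a distribution `p` on a finite type,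
with the sum restricted to the support of `p`. -/
noncomputable def tsallisEnt {α : Type*} [Fintype α] (q : ℝ) (p : α → ℝ) : ℝ :=
  (1 / (1 - q)) * ((∑ x ∈ univ.filter (fun x => 0 < p x), p x ^ q) - 1)

/-- The bound `f(q,a,b) = (1/(q−1))·(1−a^{1−q})·(1−b^{1−q})`. -/
noncomputable def fBound (q : ℝ) (a b : ℕ) : ℝ :=
  (1 / (q - 1)) * (1 - (a : ℝ) ^ (1 - q)) * (1 - (b : ℝ) ^ (1 - q))

/-- The distribution on three binary variables `A`, `B`, `C` given by
`p(0,0,0)=3/10, p(0,0,1)=0, p(0,1,0)=2/10, p(0,1,1)=0, p(1,0,0)=1/10,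
p(1,0,1)=1/10, p(1,1,0)=2/10, p(1,1,1)=1/10`. -/
noncomputable def pABC : Fin 2 × Fin 2 × Fin 2 → ℝ := fun t =>
  if t = (0, 0, 0) then 3 / 10
  else if t = (0, 1, 0) then 2 / 10
  else if t = (1, 0, 0) then 1 / 10
  else if t = (1, 0, 1) then 1 / 10
  else if t = (1, 1, 0) then 2 / 10
  else if t = (1, 1, 1) then 1 / 10
  else 0

/-- The distribution `pABC` is a probability distribution with
`I_2(A:BC) = 9/25 < 3/8 = f(2,2,4)` and yet `I_2(A:B) = 13/50 > 1/4 = f(2,2,2)`: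
the constraint `I_q(A:BC) ≤ f(q,d_A,d_{BC})` does not imply
`I_q(A:B) ≤ f(q,d_A,d_B)`. -/
theorem tsallis_monotonicity_counterexample :
    (∀ t, 0 ≤ pABC t) ∧ (∑ t, pABC t = 1) ∧
    (tsallisEnt 2 (fun a => ∑ b, ∑ c, pABC (a, b, c))
        + tsallisEnt 2 (fun w : Fin 2 × Fin 2 => ∑ a, pABC (a, w.1, w.2))
        - tsallisEnt 2 pABC
      = 9 / 25) ∧
    ((9 : ℝ) / 25 < 3 / 8) ∧ (fBound 2 2 4 = 3 / 8) ∧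
    (tsallisEnt 2 (fun a => ∑ b, ∑ c, pABC (a, b, c))
        + tsallisEnt 2 (fun b => ∑ a, ∑ c, pABC (a, b, c))
        - tsallisEnt 2 (fun w : Fin 2 × Fin 2 => ∑ c, pABC (w.1, w.2, c))
      = 13 / 50) ∧
    ((1 : ℝ) / 4 < 13 / 50) ∧ (fBound 2 2 2 = 1 / 4) := by
  refine ⟨?_, ?_, ?_, by norm_num, ?_, ?_, by norm_num, ?_⟩
  · intro t
    fin_cases t <;> norm_num [pABC, Prod.ext_iff]
  · simp [Fintype.sum_prod_type, Fin.sum_univ_succ, pABC]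
    norm_num [Prod.ext_iff]
  · simp only [tsallisEnt, Finset.sum_filter, Fintype.sum_prod_type, Fin.sum_univ_succ,
      Fin.sum_univ_zero, pABC]
    norm_num [Prod.ext_iff, Finset.sum_filter, Fintype.sum_prod_type, Fin.sum_univ_succ]
  · norm_num [fBound]
  · simp only [tsallisEnt, Finset.sum_filter, Fintype.sum_prod_type, Fin.sum_univ_succ,
      Fin.sum_univ_zero, pABC]
    norm_num [Prod.ext_iff]
  · norm_num [fBound]
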